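/- Let n be a positive integer with n ≡ 0 (mod 4). Then the limit A_n = lim_{k→∞} ∫₀^π |cosⁿ x − cosⁿ(kx)| dx (k ranging over the positive integers) exists and equals (16/(2ⁿ·π)) · Σ_{j=0}^{(n−4)/4} C(n,2j+1)/(n/2 − (2j+1))², where C(n,m) denotes the binomial coefficient. -/

import Mathlib

open Real Filter MeasureTheory Topology intervalIntegral

lemma cos_pow_expand (n : ℕ) (x : ℝ) :
    Real.cos x ^ n = (2:ℝ)⁻¹ ^ n *
      ∑ m ∈ Finset.range (n+1), (n.choose m : ℝ) * Real.cos (((n:ℝ) - 2*m) * x) := by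
  have h : ((2:ℂ) * Complex.cos x) ^ n =
      ∑ m ∈ Finset.range (n+1), (n.choose m : ℂ) * Complex.exp (((2*(m:ℝ) - n) * x : ℝ) * Complex.I) := by
    rw [Complex.two_cos, add_pow]
    refine Finset.sum_congr rfl fun m hm => ?_
    have hm' : m ≤ n := Nat.lt_succ_iff.mp (Finset.mem_range.mp hm)
    rw [← Complex.exp_nat_mul, ← Complex.exp_nat_mul, ← Complex.exp_add, mul_comm]
    congr 2
    push_cast [hm']
    ring
  have h2 := congrArg Complex.re h
  rw [Complex.re_sum] at h2
  have lhs : ((2:ℂ) * Complex.cos x) ^ n = (((2 * Real.cos x) ^ n : ℝ) : ℂ) := by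
    push_cast [Complex.ofReal_cos]; ring
  rw [lhs, Complex.ofReal_re] at h2
  have h3 : (2 * Real.cos x) ^ n = ∑ m ∈ Finset.range (n+1),
      (n.choose m : ℝ) * Real.cos (((n:ℝ) - 2*m) * x) := by
    rw [h2]
    refine Finset.sum_congr rfl fun m hm => ?_
    rw [show ((n.choose m : ℂ)) = (((n.choose m : ℝ)):ℂ) by push_cast; rfl]
    rw [Complex.re_ofReal_mul, Complex.exp_ofReal_mul_I_re]
    rw [show ((n:ℝ) - 2*m) * x = -((2*(m:ℝ) - n) * x) by ring, Real.cos_neg]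
  rw [mul_pow] at h3
  rw [inv_pow]
  field_simp
  linarith [h3]

lemma term_integral (q m : ℕ) :
    ∫ x in (0:ℝ)..(π/2), (π/2 - 2*x) * Real.cos ((((4*q:ℕ):ℝ) - 2*m) * x) =
      if m % 2 = 1 then 4/((((4*q:ℕ):ℝ))-2*m)^2 else 0 := by
  set c : ℝ := ((4*q:ℕ):ℝ) - 2*m with hc
  by_cases hc0 : c = 0
  · have hc0' : ((4*q:ℕ):ℝ) - 2*m = 0 := hc ▸ hc0
    have hm : m = 2*q := by
      have h' : (m:ℝ) = ((2*q:ℕ):ℝ) := by push_cast at hc0' ⊢; linarith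
      exact_mod_cast h'
    have hme : m % 2 = 0 := by omega
    rw [hme]
    norm_num
    have hd0 : ∀ x ∈ Set.uIcc (0:ℝ) (π/2), HasDerivAt
        (fun x => π/2*x - x^2) ((π/2 - 2*x) * Real.cos (c*x)) x := by
      intro x _
      rw [hc0]
      have : HasDerivAt (fun x:ℝ => π/2*x - x^2) (π/2 - 2*x) x := by
        simpa using ((hasDerivAt_id' x).const_mul (π/2)).fun_sub (hasDerivAt_pow 2 x)
      simpa using this
    rw [intervalIntegral.integral_eq_sub_of_hasDerivAt hd0
      (Continuous.intervalIntegrable (by fun_prop) _ _)]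
    ring
  · have hd : ∀ x ∈ Set.uIcc (0:ℝ) (π/2), HasDerivAt
        (fun x => (π/2 - 2*x) * Real.sin (c*x)/c - 2*Real.cos (c*x)/c^2)
        ((π/2 - 2*x) * Real.cos (c*x)) x := by
      intro x _
      have hcx : HasDerivAt (fun x:ℝ => c*x) c x := by
        simpa using (hasDerivAt_id x).const_mul c
      have hsin : HasDerivAt (fun x => Real.sin (c*x)) (Real.cos (c*x) * c) x :=
        (Real.hasDerivAt_sin (c*x)).comp x hcx
      have hcos : HasDerivAt (fun x => Real.cos (c*x)) (-Real.sin (c*x) * c) x :=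
        (Real.hasDerivAt_cos (c*x)).comp x hcx
      have hlin : HasDerivAt (fun x:ℝ => π/2 - 2*x) (-2) x := by
        simpa using (hasDerivAt_id x).const_mul (2:ℝ) |>.const_sub (π/2)
      have := ((hlin.fun_mul hsin).div_const c).fun_sub ((hcos.const_mul 2).div_const (c^2))
      refine this.congr_deriv ?_
      field_simp
      ring
    rw [intervalIntegral.integral_eq_sub_of_hasDerivAt hd (Continuous.intervalIntegrable (by fun_prop) _ _)]
    have key : c * (π/2) = ((2*(q:ℤ) - m : ℤ):ℝ) * π := by
      rw [hc]; push_cast; ring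
    have hsin0 : Real.sin (c * (π/2)) = 0 := by rw [key]; exact Real.sin_int_mul_pi _
    have hcos' : Real.cos (c * (π/2)) = (-1:ℝ) ^ (2*(q:ℤ) - m) := by
      rw [key, show ((2*(q:ℤ) - m : ℤ):ℝ) * π = ((2*(q:ℤ) - m : ℤ):ℝ) * π - 0 by ring,
        Real.cos_int_mul_pi_sub, Real.cos_zero, mul_one]
    rcases Nat.even_or_odd m with he | ho
    · have hme : m % 2 = 0 := Nat.even_iff.mp he
      rw [if_neg (by omega)]
      have hje : Even (2*(q:ℤ) - m) := by
        rcases he with ⟨r, hr⟩; exact ⟨(q:ℤ) - r, by omega⟩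
      rw [hje.neg_one_zpow] at hcos'
      rw [show c * (π/2 : ℝ) = c * (π/2) by rfl] at hsin0
      simp only [mul_zero, Real.sin_zero, Real.cos_zero]
      rw [hsin0, hcos']
      field_simp
      ring
    · have hmo : m % 2 = 1 := Nat.odd_iff.mp ho
      rw [if_pos hmo]
      have hjo : Odd (2*(q:ℤ) - m) := by
        rcases ho with ⟨r, hr⟩; exact ⟨(q:ℤ) - r - 1, by omega⟩
      rw [hjo.neg_one_zpow] at hcos'
      simp only [mul_zero, Real.sin_zero, Real.cos_zero]
      rw [hsin0, hcos']
      field_simp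
      ring

lemma sum_odd_terms (g : ℕ → ℝ) (t : ℕ) (h : ∀ m, m % 2 = 0 → g m = 0) :
    ∑ m ∈ Finset.range (2*t+1), g m = ∑ j ∈ Finset.range t, g (2*j+1) := by
  induction t with
  | zero => simpa using h 0 rfl
  | succ t ih =>
    rw [show 2*(t+1)+1 = (2*t+1)+1+1 by ring, Finset.sum_range_succ, Finset.sum_range_succ,
      ih, Finset.sum_range_succ, h (2*t+1+1) (by omega)]
    ring

lemma sum_two_halves (b : ℕ → ℝ) (s : ℕ) (h : ∀ j < s, b (2*s - 1 - j) = b j) :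
    ∑ j ∈ Finset.range (2*s), b j = 2 * ∑ j ∈ Finset.range s, b j := by
  rw [Finset.range_eq_Ico, ← Finset.sum_Ico_consecutive b (Nat.zero_le s) (show s ≤ 2*s by omega),
    ← Finset.range_eq_Ico]
  have h3 : ∑ i ∈ Finset.Ico s (2*s), b i = ∑ i ∈ Finset.range s, b i := by
    rw [Finset.sum_Ico_eq_sum_range]
    have e : 2*s - s = s := by omega
    rw [e, ← Finset.sum_range_reflect (fun i => b (s + i)) s]
    refine Finset.sum_congr rfl fun i hi => ?_
    have hi' : i < s := Finset.mem_range.mp hi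
    show b (s + (s - 1 - i)) = b i
    rw [show s + (s - 1 - i) = 2*s - 1 - i by omega, h i hi']
  rw [h3]; ring

lemma T_val (q : ℕ) (hq : 0 < q) :
    ∫ x in (0:ℝ)..(π/2), (π/2 - 2*x) * Real.cos x ^ (4*q) =
      (2:ℝ)⁻¹ ^ (4*q) * 2 *
        ∑ j ∈ Finset.range q,
          ((4*q).choose (2*j+1) : ℝ) / (((4*q:ℕ):ℝ)/2 - (2*(j:ℝ)+1))^2 := by
  have expand : ∀ x : ℝ, (π/2 - 2*x) * Real.cos x ^ (4*q) =
      ∑ m ∈ Finset.range (4*q+1),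
        ((2:ℝ)⁻¹ ^ (4*q) * ((4*q).choose m : ℝ)) *
          ((π/2 - 2*x) * Real.cos ((((4*q:ℕ):ℝ) - 2*m) * x)) := by
    intro x
    rw [cos_pow_expand (4*q) x, Finset.mul_sum]
    rw [Finset.mul_sum]
    refine Finset.sum_congr rfl fun m _ => ?_
    push_cast
    ring
  rw [intervalIntegral.integral_congr (fun x _ => expand x)]
  rw [intervalIntegral.integral_finset_sum (fun m _ =>
    Continuous.intervalIntegrable (by fun_prop) _ _)]
  have : ∀ m ∈ Finset.range (4*q+1),
      (∫ x in (0:ℝ)..(π/2), ((2:ℝ)⁻¹ ^ (4*q) * ((4*q).choose m : ℝ)) *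
        ((π/2 - 2*x) * Real.cos ((((4*q:ℕ):ℝ) - 2*m) * x)))
      = ((2:ℝ)⁻¹ ^ (4*q) * ((4*q).choose m : ℝ)) *
          (if m % 2 = 1 then 4/((((4*q:ℕ):ℝ))-2*m)^2 else 0) := by
    intro m _
    rw [intervalIntegral.integral_const_mul, term_integral q m]
  rw [Finset.sum_congr rfl this]
  set g : ℕ → ℝ := fun m => ((2:ℝ)⁻¹ ^ (4*q) * ((4*q).choose m : ℝ)) *
      (if m % 2 = 1 then 4/((((4*q:ℕ):ℝ))-2*m)^2 else 0) with hg
  have hzero : ∀ m, m % 2 = 0 → g m = 0 := by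
    intro m hm; simp [hg, hm]
  have h1 : ∑ m ∈ Finset.range (4*q+1), g m = ∑ j ∈ Finset.range (2*q), g (2*j+1) := by
    rw [show 4*q+1 = 2*(2*q)+1 by ring]
    exact sum_odd_terms g (2*q) hzero
  rw [h1]
  set b : ℕ → ℝ := fun j => g (2*j+1) with hb
  have hrefl : ∀ j < q, b (2*q - 1 - j) = b j := by
    intro j hj
    simp only [hb, hg]
    have e1 : 2*(2*q - 1 - j)+1 = 4*q - (2*j+1) := by omega
    rw [e1]
    have hle : 2*j+1 ≤ 4*q := by omega
    rw [Nat.choose_symm hle]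
    have hmod1 : (4*q - (2*j+1)) % 2 = 1 := by omega
    rw [if_pos hmod1, if_pos (by omega : (2*j+1) % 2 = 1)]
    have hcast : ((4*q - (2*j+1) : ℕ) : ℝ) = 4*(q:ℝ) - (2*(j:ℝ)+1) := by
      push_cast [Nat.cast_sub hle]; ring
    congr 1
    rw [hcast]
    have : (((4*q:ℕ):ℝ)) - 2*(4*(q:ℝ) - (2*(j:ℝ)+1)) = -((((4*q:ℕ):ℝ)) - 2*((2*(j:ℝ)+1))) := by
      push_cast; ring
    rw [this]
    rw [show ((((2*j+1:ℕ)):ℝ)) = 2*(j:ℝ)+1 by push_cast; ring]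
    rw [neg_sq]
  have h2 : ∑ j ∈ Finset.range (2*q), b j = 2 * ∑ j ∈ Finset.range q, b j :=
    sum_two_halves b q hrefl
  have hbj : ∀ j : ℕ, b j = (2:ℝ)⁻¹ ^ (4*q) *
      (((4*q).choose (2*j+1) : ℝ) / (((4*q:ℕ):ℝ)/2 - (2*(j:ℝ)+1))^2) := by
    intro j
    simp only [hb, hg]
    rw [if_pos (by omega : (2*j+1) % 2 = 1)]
    rw [show ((((2*j+1:ℕ)):ℝ)) = 2*(j:ℝ)+1 by push_cast; ring]
    have hd : (((4*q:ℕ):ℝ) - 2*(2*(j:ℝ)+1))^2 = 4 * ((((4*q:ℕ):ℝ))/2 - (2*(j:ℝ)+1))^2 := by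
      push_cast; ring
    have hne : ((((4*q:ℕ):ℝ))/2 - (2*(j:ℝ)+1)) ≠ 0 := by
      push_cast
      intro hcon
      have h5 : (2*(q:ℝ)) = 2*(j:ℝ)+1 := by linarith
      have h6 : (2*q : ℕ) = 2*j+1 := by exact_mod_cast h5
      omega
    rw [hd]
    set X : ℝ := (((4*q:ℕ):ℝ))/2 - (2*(j:ℝ)+1) with hX
    have hxx : X^2 ≠ 0 := pow_ne_zero 2 hne
    have h4 : (4:ℝ)/(4*X^2) = 1/X^2 := by
      rw [div_eq_div_iff (mul_ne_zero four_ne_zero hxx) hxx]; ring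
    rw [h4]; ring
  calc ∑ j ∈ Finset.range (2*q), b j = 2 * ∑ j ∈ Finset.range q, b j := h2
    _ = (2:ℝ)⁻¹ ^ (4*q) * 2 * ∑ j ∈ Finset.range q,
          ((4*q).choose (2*j+1) : ℝ) / (((4*q:ℕ):ℝ)/2 - (2*(j:ℝ)+1))^2 := by
        rw [Finset.sum_congr rfl (fun j _ => hbj j), ← Finset.mul_sum]
        ring

-- analytic framework
lemma f_per (n : ℕ) (hn : Even n) (x : ℝ) : Real.cos (x + π) ^ n = Real.cos x ^ n := by
  rw [Real.cos_add_pi, hn.neg_pow]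

lemma f_lip (n : ℕ) (x y : ℝ) : |Real.cos x ^ n - Real.cos y ^ n| ≤ n * |x - y| := by
  have hder : ∀ z : ℝ, HasDerivAt (fun w => Real.cos w ^ n)
      ((n:ℝ) * Real.cos z ^ (n-1) * (-Real.sin z)) z := fun z =>
    (Real.hasDerivAt_cos z).pow n
  have hdiff : Differentiable ℝ (fun w : ℝ => Real.cos w ^ n) :=
    fun z => (hder z).differentiableAt
  have hb : ∀ z : ℝ, ‖deriv (fun w : ℝ => Real.cos w ^ n) z‖₊ ≤ (n : NNReal) := by
    intro z
    rw [(hder z).deriv]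
    rw [← NNReal.coe_le_coe]
    push_cast
    rw [Real.norm_eq_abs]
    calc |(n:ℝ) * Real.cos z ^ (n-1) * (-Real.sin z)|
        = (n:ℝ) * |Real.cos z| ^ (n-1) * |Real.sin z| := by
          rw [abs_mul, abs_mul, abs_neg, abs_pow, Nat.abs_cast]
      _ ≤ (n:ℝ) * 1 * 1 := by
          apply mul_le_mul
          · apply mul_le_mul le_rfl (pow_le_one₀ (abs_nonneg _) (Real.abs_cos_le_one z))
              (pow_nonneg (abs_nonneg _) _) (Nat.cast_nonneg n)
          · exact Real.abs_sin_le_one z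
          · exact abs_nonneg _
          · positivity
      _ = (n:ℝ) := by ring
  have hlip := lipschitzWith_of_nnnorm_deriv_le hdiff hb
  have := hlip.dist_le_mul x y
  simpa [Real.dist_eq, NNReal.coe_natCast] using this

noncomputable def Gfun (n : ℕ) (x : ℝ) : ℝ := ∫ t in (0:ℝ)..π, |Real.cos x ^ n - Real.cos t ^ n|

lemma G_diff_le (n : ℕ) (x y : ℝ) : |Gfun n x - Gfun n y| ≤ (n * π) * |x - y| := by
  have hint : ∀ z : ℝ, IntervalIntegrable (fun t => |Real.cos z ^ n - Real.cos t ^ n|)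
      volume (0:ℝ) π := fun z => Continuous.intervalIntegrable (by fun_prop) _ _
  rw [Gfun, Gfun, ← intervalIntegral.integral_sub (hint x) (hint y)]
  have hb : ∀ t ∈ Set.uIoc (0:ℝ) π,
      ‖|Real.cos x ^ n - Real.cos t ^ n| - |Real.cos y ^ n - Real.cos t ^ n|‖ ≤ n * |x - y| := by
    intro t _
    rw [Real.norm_eq_abs]
    have h1 := abs_abs_sub_abs_le_abs_sub (Real.cos x ^ n - Real.cos t ^ n)
      (Real.cos y ^ n - Real.cos t ^ n)
    have h2 : (Real.cos x ^ n - Real.cos t ^ n) - (Real.cos y ^ n - Real.cos t ^ n)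
        = Real.cos x ^ n - Real.cos y ^ n := by ring
    rw [h2] at h1
    exact h1.trans (f_lip n x y)
  have := intervalIntegral.norm_integral_le_of_norm_le_const hb
  rw [Real.norm_eq_abs] at this
  refine le_trans this (le_of_eq ?_)
  rw [sub_zero, abs_of_pos Real.pi_pos]
  ring

lemma G_cont (n : ℕ) : Continuous (Gfun n) := by
  have : LipschitzWith ((n : NNReal) * Real.pi.toNNReal) (Gfun n) := by
    apply LipschitzWith.of_dist_le_mul
    intro x y
    rw [Real.dist_eq, Real.dist_eq]
    calc |Gfun n x - Gfun n y| ≤ (n * π) * |x - y| := G_diff_le n x y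
      _ = ((n : NNReal) * Real.pi.toNNReal : NNReal) * |x - y| := by
          push_cast [Real.coe_toNNReal _ Real.pi_pos.le]; ring
  exact this.continuous

lemma key_bound (n k : ℕ) (hn : Even n) (hk : 1 ≤ k) :
    |(∫ x in (0:ℝ)..π, |Real.cos x ^ n - Real.cos (k*x) ^ n|)
      - (1/π) * ∫ x in (0:ℝ)..π, Gfun n x| ≤ 2*n*π^2 / k := by
  have hk0 : (k:ℝ) ≠ 0 := by positivity
  have hkpos : (0:ℝ) < k := by positivity
  set f : ℝ → ℝ := fun x => Real.cos x ^ n with hf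
  have hfc : Continuous f := by fun_prop
  have hper : Function.Periodic f π := fun x => f_per n hn x
  set a : ℕ → ℝ := fun j => j * π / k with ha
  have ha0 : a 0 = 0 := by simp [ha]
  have hak : a k = π := by rw [ha]; field_simp
  have hamono : ∀ j, a (j+1) - a j = π / k := by
    intro j; rw [ha]; push_cast; field_simp; ring
  -- part 1 : split
  have part1 : (∫ x in (0:ℝ)..π, |f x - f (k*x)|)
      = ∑ j ∈ Finset.range k, ∫ x in a j..a (j+1), |f x - f (k*x)| := by
    rw [← ha0, ← hak]
    exact (intervalIntegral.sum_integral_adjacent_intervals (fun j _ =>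
      Continuous.intervalIntegrable (by fun_prop) _ _)).symm
  -- part 2 : substitution on each piece
  have part2 : ∀ j : ℕ, (∫ x in a j..a (j+1), |f x - f (k*x)|)
      = (k:ℝ)⁻¹ * ∫ t in (0:ℝ)..π, |f ((t + j*π)/k) - f t| := by
    intro j
    set g2 : ℝ → ℝ := fun u => |f (u/k) - f u| with hg2
    have e1 : Set.EqOn (fun x => |f x - f (k*x)|) (fun x => g2 (k*x))
        (Set.uIcc (a j) (a (j+1))) := by
      intro x _
      simp only [hg2]
      rw [mul_comm (k:ℝ) x, mul_div_assoc, div_self hk0, mul_one]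
    rw [intervalIntegral.integral_congr e1]
    rw [intervalIntegral.integral_comp_mul_left g2 hk0]
    have hb1 : (k:ℝ) * a j = j*π := by rw [ha]; field_simp
    have hb2 : (k:ℝ) * a (j+1) = π + j*π := by rw [ha]; push_cast; field_simp; ring
    rw [hb1, hb2]
    have e2 : (∫ t in (0:ℝ)..π, |f ((t + j*π)/k) - f t|)
        = ∫ t in (0:ℝ)..π, g2 (t + j*π) := by
      refine intervalIntegral.integral_congr fun t _ => ?_
      simp only [hg2]
      rw [(hper.nat_mul j) t]
    rw [e2, intervalIntegral.integral_comp_add_right g2 (j*π), zero_add, smul_eq_mul]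
  -- part 3 : each piece integral is close to Gfun n (a j)
  have part3 : ∀ j : ℕ, |(∫ t in (0:ℝ)..π, |f ((t + j*π)/k) - f t|) - Gfun n (a j)|
      ≤ n * π^2 / k := by
    intro j
    have hint1 : IntervalIntegrable (fun t => |f ((t + j*π)/k) - f t|) volume (0:ℝ) π :=
      Continuous.intervalIntegrable (by fun_prop) _ _
    have hint2 : IntervalIntegrable (fun t => |f (a j) - f t|) volume (0:ℝ) π :=
      Continuous.intervalIntegrable (by fun_prop) _ _
    rw [Gfun, ← intervalIntegral.integral_sub hint1 hint2]
    have hb : ∀ t ∈ Set.uIoc (0:ℝ) π,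
        ‖|f ((t + j*π)/k) - f t| - |f (a j) - f t|‖ ≤ n * π / k := by
      intro t ht
      rw [Set.uIoc_of_le Real.pi_pos.le] at ht
      rw [Real.norm_eq_abs]
      have h1 := abs_abs_sub_abs_le_abs_sub (f ((t + j*π)/k) - f t) (f (a j) - f t)
      have h2 : (f ((t + j*π)/k) - f t) - (f (a j) - f t) = f ((t + j*π)/k) - f (a j) := by
        ring
      rw [h2] at h1
      refine h1.trans ((f_lip n _ _).trans ?_)
      have h3 : (t + j*π)/k - a j = t/k := by rw [ha]; field_simp; try ring
      rw [h3, abs_of_nonneg (div_nonneg ht.1.le hkpos.le)]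
      calc (n:ℝ) * (t/k) ≤ n * (π/k) := by
            apply mul_le_mul_of_nonneg_left _ (Nat.cast_nonneg n)
            gcongr
            exact ht.2
        _ = n * π / k := by ring
    have := intervalIntegral.norm_integral_le_of_norm_le_const hb
    rw [Real.norm_eq_abs, sub_zero, abs_of_pos Real.pi_pos] at this
    refine this.trans (le_of_eq ?_)
    ring
  -- part 4 : Riemann sum estimate for G
  have haj : ∀ j : ℕ, a j ≤ a (j+1) := by
    intro j
    have := hamono j
    have hπk : 0 < π / k := by positivity
    linarith
  have hGsplit : (∫ x in (0:ℝ)..π, Gfun n x)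
      = ∑ j ∈ Finset.range k, ∫ x in a j..a (j+1), Gfun n x := by
    rw [← ha0, ← hak]
    exact (intervalIntegral.sum_integral_adjacent_intervals (fun j _ =>
      (G_cont n).intervalIntegrable _ _)).symm
  have part4 : ∀ j : ℕ, |(k:ℝ)⁻¹ * Gfun n (a j) - (1/π) * ∫ x in a j..a (j+1), Gfun n x|
      ≤ n * π^2 / k^2 := by
    intro j
    have hconst : (k:ℝ)⁻¹ * Gfun n (a j)
        = (1/π) * ∫ _x in a j..a (j+1), Gfun n (a j) := by
      rw [intervalIntegral.integral_const, hamono j, smul_eq_mul]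
      field_simp
    rw [hconst, ← mul_sub,
      ← intervalIntegral.integral_sub (intervalIntegrable_const) ((G_cont n).intervalIntegrable _ _)]
    rw [abs_mul, abs_of_pos (by positivity : (0:ℝ) < 1/π)]
    have hb : ∀ x ∈ Set.uIoc (a j) (a (j+1)),
        ‖Gfun n (a j) - Gfun n x‖ ≤ (n*π) * (π/k) := by
      intro x hx
      rw [Set.uIoc_of_le (haj j)] at hx
      rw [Real.norm_eq_abs]
      refine (G_diff_le n (a j) x).trans ?_
      apply mul_le_mul_of_nonneg_left _ (by positivity)
      rw [abs_of_nonpos (by linarith [hx.1] : a j - x ≤ 0)]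
      have := hamono j
      linarith [hx.2]
    have hbd := intervalIntegral.norm_integral_le_of_norm_le_const hb
    rw [Real.norm_eq_abs] at hbd
    have hlen : |a (j+1) - a j| = π / k := by
      rw [hamono j]; exact abs_of_pos (by positivity)
    rw [hlen] at hbd
    calc (1/π) * |∫ x in a j..a (j+1), (Gfun n (a j) - Gfun n x)|
        ≤ (1/π) * ((n*π) * (π/k) * (π/k)) := by
          apply mul_le_mul_of_nonneg_left hbd (by positivity)
      _ = n * π^2 / k^2 := by field_simp
  -- assembly
  have main : (∫ x in (0:ℝ)..π, |f x - f (k*x)|) - (1/π) * ∫ x in (0:ℝ)..π, Gfun n x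
      = ∑ j ∈ Finset.range k,
          ((k:ℝ)⁻¹ * ((∫ t in (0:ℝ)..π, |f ((t + j*π)/k) - f t|) - Gfun n (a j))
            + ((k:ℝ)⁻¹ * Gfun n (a j) - (1/π) * ∫ x in a j..a (j+1), Gfun n x)) := by
    rw [part1, hGsplit, Finset.mul_sum, ← Finset.sum_sub_distrib]
    refine Finset.sum_congr rfl fun j _ => ?_
    rw [part2 j]
    ring
  rw [main]
  refine (Finset.abs_sum_le_sum_abs _ _).trans ?_
  have hterm : ∀ j ∈ Finset.range k,
      |(k:ℝ)⁻¹ * ((∫ t in (0:ℝ)..π, |f ((t + j*π)/k) - f t|) - Gfun n (a j))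
        + ((k:ℝ)⁻¹ * Gfun n (a j) - (1/π) * ∫ x in a j..a (j+1), Gfun n x)|
      ≤ 2*n*π^2/k^2 := by
    intro j _
    refine (abs_add_le _ _).trans ?_
    have h1 : |(k:ℝ)⁻¹ * ((∫ t in (0:ℝ)..π, |f ((t + j*π)/k) - f t|) - Gfun n (a j))|
        ≤ (k:ℝ)⁻¹ * (n * π^2 / k) := by
      rw [abs_mul, abs_of_pos (by positivity : (0:ℝ) < (k:ℝ)⁻¹)]
      exact mul_le_mul_of_nonneg_left (part3 j) (by positivity)
    refine (add_le_add h1 (part4 j)).trans (le_of_eq ?_)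
    field_simp
    ring
  refine (Finset.sum_le_sum hterm).trans ?_
  rw [Finset.sum_const, Finset.card_range, nsmul_eq_mul]
  rw [show (k:ℝ) * (2*n*π^2/k^2) = 2*n*π^2/k * (k * k / k^2) by field_simp]
  rw [show (k:ℝ) * k / k^2 = 1 by field_simp]
  rw [mul_one]

lemma tendsto_main (n : ℕ) (hn : Even n) :
    Tendsto (fun k : ℕ => ∫ x in (0:ℝ)..π, |Real.cos x ^ n - Real.cos (k*x) ^ n|) atTop
      (𝓝 ((1/π) * ∫ x in (0:ℝ)..π, Gfun n x)) := by
  set L : ℝ := (1/π) * ∫ x in (0:ℝ)..π, Gfun n x with hL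
  have h0 : Tendsto (fun k : ℕ =>
      (∫ x in (0:ℝ)..π, |Real.cos x ^ n - Real.cos (k*x) ^ n|) - L) atTop (𝓝 0) := by
    refine squeeze_zero_norm' ?_ (tendsto_const_div_atTop_nhds_zero_nat (2*n*π^2))
    filter_upwards [eventually_ge_atTop 1] with k hk
    rw [Real.norm_eq_abs]
    exact key_bound n k hn hk
  have := h0.add_const L
  simpa using this

lemma reflect_integral (h : ℝ → ℝ) (hc : Continuous h) (hsym : ∀ x, h (π - x) = h x) :
    (∫ x in (0:ℝ)..π, h x) = 2 * ∫ x in (0:ℝ)..(π/2), h x := by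
  have hsplit : (∫ x in (0:ℝ)..(π/2), h x) + (∫ x in (π/2:ℝ)..π, h x)
      = ∫ x in (0:ℝ)..π, h x :=
    intervalIntegral.integral_add_adjacent_intervals
      (hc.intervalIntegrable _ _) (hc.intervalIntegrable _ _)
  have h2 : (∫ x in (π/2:ℝ)..π, h x) = ∫ x in (0:ℝ)..(π/2), h x := by
    have := intervalIntegral.integral_comp_sub_left (a := (0:ℝ)) (b := π/2) h π
    rw [show π - π/2 = π/2 by ring, sub_zero] at this
    rw [← this]
    exact intervalIntegral.integral_congr fun x _ => (hsym x)
  linarith [hsplit, h2]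

lemma G2_formula (n : ℕ) (x : ℝ) (hx : x ∈ Set.Icc (0:ℝ) (π/2)) :
    (∫ t in (0:ℝ)..(π/2), |Real.cos x ^ n - Real.cos t ^ n|)
      = (π/2 - 2*x) * Real.cos x ^ n + 2 * (∫ t in (0:ℝ)..x, Real.cos t ^ n)
        - ∫ t in (0:ℝ)..(π/2), Real.cos t ^ n := by
  set f : ℝ → ℝ := fun t => Real.cos t ^ n with hf
  have hfc : Continuous f := by fun_prop
  have hmono : ∀ s t : ℝ, 0 ≤ s → s ≤ t → t ≤ π/2 → f t ≤ f s := by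
    intro s t hs hst ht
    have h1 : 0 ≤ Real.cos t := Real.cos_nonneg_of_mem_Icc ⟨by linarith [Real.pi_pos], ht⟩
    have h2 : Real.cos t ≤ Real.cos s :=
      Real.cos_le_cos_of_nonneg_of_le_pi hs (by linarith [Real.pi_pos]) hst
    exact pow_le_pow_left₀ h1 h2 n
  have hkey : ∀ t : ℝ, |f x - f t| = (f x - f t) + 2 * max (f t - f x) 0 := by
    intro t
    rcases le_total (f t) (f x) with h | h
    · rw [abs_of_nonneg (by linarith), max_eq_right (by linarith)]; ring
    · rw [abs_of_nonpos (by linarith), max_eq_left (by linarith)]; ring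
  have hintc : IntervalIntegrable (fun t => (f x - f t) + 2 * max (f t - f x) 0)
      volume (0:ℝ) (π/2) := Continuous.intervalIntegrable (by fun_prop) _ _
  rw [intervalIntegral.integral_congr (fun t _ => hkey t)]
  rw [intervalIntegral.integral_add (Continuous.intervalIntegrable (by fun_prop) _ _)
    (Continuous.intervalIntegrable (by fun_prop) _ _)]
  rw [intervalIntegral.integral_sub (Continuous.intervalIntegrable (by fun_prop) _ _)
    (hfc.intervalIntegrable _ _)]
  rw [intervalIntegral.integral_const]
  have hmax : (∫ t in (0:ℝ)..(π/2), 2 * max (f t - f x) 0)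
      = 2 * ((∫ t in (0:ℝ)..x, f t) - x * f x) := by
    rw [intervalIntegral.integral_const_mul]
    have hsplit : (∫ t in (0:ℝ)..x, max (f t - f x) 0)
        + (∫ t in x..(π/2), max (f t - f x) 0)
        = ∫ t in (0:ℝ)..(π/2), max (f t - f x) 0 :=
      intervalIntegral.integral_add_adjacent_intervals
        (Continuous.intervalIntegrable (by fun_prop) _ _)
        (Continuous.intervalIntegrable (by fun_prop) _ _)
    have h1 : (∫ t in (0:ℝ)..x, max (f t - f x) 0) = ∫ t in (0:ℝ)..x, (f t - f x) := by
      refine intervalIntegral.integral_congr fun t ht => ?_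
      rw [Set.uIcc_of_le hx.1] at ht
      exact max_eq_left (by linarith [hmono t x ht.1 ht.2 hx.2])
    have h2 : (∫ t in x..(π/2), max (f t - f x) 0) = ∫ t in x..(π/2), (0:ℝ) := by
      refine intervalIntegral.integral_congr fun t ht => ?_
      rw [Set.uIcc_of_le hx.2] at ht
      exact max_eq_right (by linarith [hmono x t hx.1 ht.1 ht.2])
    rw [← hsplit, h1, h2, intervalIntegral.integral_zero, add_zero,
      intervalIntegral.integral_sub (hfc.intervalIntegrable _ _) intervalIntegrable_const,
      intervalIntegral.integral_const]
    simp [smul_eq_mul]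
  rw [hmax]
  simp only [smul_eq_mul, sub_zero]
  ring

lemma parts_lemma (n : ℕ) :
    (∫ x in (0:ℝ)..(π/2), ((∫ t in (0:ℝ)..x, Real.cos t ^ n) + x * Real.cos x ^ n))
      = (π/2) * ∫ t in (0:ℝ)..(π/2), Real.cos t ^ n := by
  set f : ℝ → ℝ := fun t => Real.cos t ^ n with hf
  have hfc : Continuous f := by fun_prop
  have hd : ∀ x ∈ Set.uIcc (0:ℝ) (π/2), HasDerivAt (fun x => x * ∫ t in (0:ℝ)..x, f t)
      ((∫ t in (0:ℝ)..x, f t) + x * f x) x := by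
    intro x _
    have hΦ : HasDerivAt (fun u => ∫ t in (0:ℝ)..u, f t) (f x) x :=
      (hfc.integral_hasStrictDerivAt 0 x).hasDerivAt
    have := (hasDerivAt_id' x).fun_mul hΦ
    simpa using this
  have hΦc : Continuous (fun u => ∫ t in (0:ℝ)..u, f t) :=
    intervalIntegral.continuous_primitive (fun a b => hfc.intervalIntegrable a b) 0
  rw [intervalIntegral.integral_eq_sub_of_hasDerivAt hd
    (Continuous.intervalIntegrable (by continuity) _ _)]
  simp

lemma intG2_eq (n : ℕ) :
    (∫ x in (0:ℝ)..(π/2), ∫ t in (0:ℝ)..(π/2), |Real.cos x ^ n - Real.cos t ^ n|)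
      = 2 * ∫ x in (0:ℝ)..(π/2), (π/2 - 2*x) * Real.cos x ^ n := by
  set f : ℝ → ℝ := fun t => Real.cos t ^ n with hf
  have hfc : Continuous f := by fun_prop
  have hΦc : Continuous (fun u => ∫ t in (0:ℝ)..u, f t) :=
    intervalIntegral.continuous_primitive (fun a b => hfc.intervalIntegrable a b) 0
  have hpi2 : (0:ℝ) ≤ π/2 := by positivity
  have step1 : (∫ x in (0:ℝ)..(π/2), ∫ t in (0:ℝ)..(π/2), |Real.cos x ^ n - Real.cos t ^ n|)
      = ∫ x in (0:ℝ)..(π/2), ((π/2 - 2*x) * f x + 2 * (∫ t in (0:ℝ)..x, f t)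
          - ∫ t in (0:ℝ)..(π/2), f t) := by
    refine intervalIntegral.integral_congr fun x hxx => ?_
    rw [Set.uIcc_of_le hpi2] at hxx
    exact G2_formula n x hxx
  rw [step1]
  have hint1 : IntervalIntegrable (fun x => (π/2 - 2*x) * f x) volume (0:ℝ) (π/2) :=
    Continuous.intervalIntegrable (by fun_prop) _ _
  have hint2 : IntervalIntegrable (fun x => 2 * (∫ t in (0:ℝ)..x, f t)) volume (0:ℝ) (π/2) :=
    Continuous.intervalIntegrable (by fun_prop) _ _
  rw [intervalIntegral.integral_sub (hint1.add hint2) intervalIntegrable_const,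
    intervalIntegral.integral_add hint1 hint2,
    intervalIntegral.integral_const_mul, intervalIntegral.integral_const]
  -- now use parts_lemma to evaluate ∫ Φ
  have hparts := parts_lemma n
  have hsplit2 : (∫ x in (0:ℝ)..(π/2), ((∫ t in (0:ℝ)..x, f t) + x * f x))
      = (∫ x in (0:ℝ)..(π/2), (∫ t in (0:ℝ)..x, f t)) + ∫ x in (0:ℝ)..(π/2), x * f x := by
    exact intervalIntegral.integral_add (hΦc.intervalIntegrable _ _)
      (Continuous.intervalIntegrable (by fun_prop) _ _)
  rw [hsplit2] at hparts
  -- expand T = (π/2) P − 2 W where W = ∫ x f x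
  have hT : (∫ x in (0:ℝ)..(π/2), (π/2 - 2*x) * f x)
      = (π/2) * (∫ t in (0:ℝ)..(π/2), f t) - 2 * ∫ x in (0:ℝ)..(π/2), x * f x := by
    have : ∀ x : ℝ, (π/2 - 2*x) * f x = (π/2) * f x - 2 * (x * f x) := fun x => by ring
    rw [intervalIntegral.integral_congr (fun x _ => this x),
      intervalIntegral.integral_sub (Continuous.intervalIntegrable (by fun_prop) _ _)
        (Continuous.intervalIntegrable (by fun_prop) _ _),
      intervalIntegral.integral_const_mul, intervalIntegral.integral_const_mul]
  rw [smul_eq_mul, sub_zero]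
  linarith [hparts, hT]

lemma L_val (q : ℕ) (hq : 0 < q) :
    (1/π) * (∫ x in (0:ℝ)..π, Gfun (4*q) x)
      = 16 / (2^(4*q) * π) * ∑ j ∈ Finset.range q,
          (((4*q).choose (2*j+1) : ℝ) / (((4*q:ℕ):ℝ)/2 - (2*(j:ℝ)+1))^2) := by
  have hn : Even (4*q) := ⟨2*q, by ring⟩
  set n := 4*q with hnq
  set f : ℝ → ℝ := fun t => Real.cos t ^ n with hf
  have hfsym : ∀ x : ℝ, f (π - x) = f x := by
    intro x; simp only [hf]; rw [Real.cos_pi_sub, hn.neg_pow]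
  have hGsym : ∀ x : ℝ, Gfun n (π - x) = Gfun n x := by
    intro x
    rw [Gfun, Gfun]
    refine intervalIntegral.integral_congr fun t _ => ?_
    rw [show Real.cos (π - x) ^ n = f (π - x) from rfl, hfsym x]
  have h1 : (∫ x in (0:ℝ)..π, Gfun n x) = 2 * ∫ x in (0:ℝ)..(π/2), Gfun n x :=
    reflect_integral _ (G_cont n) hGsym
  have h2 : ∀ x : ℝ, Gfun n x = 2 * ∫ t in (0:ℝ)..(π/2), |Real.cos x ^ n - Real.cos t ^ n| := by
    intro x
    refine reflect_integral _ (by fun_prop) ?_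
    intro t
    rw [show Real.cos (π - t) ^ n = f (π - t) from rfl, hfsym t]
  have h3 : (∫ x in (0:ℝ)..(π/2), Gfun n x)
      = 2 * ∫ x in (0:ℝ)..(π/2), ∫ t in (0:ℝ)..(π/2), |Real.cos x ^ n - Real.cos t ^ n| := by
    rw [intervalIntegral.integral_congr (fun x _ => h2 x)]
    exact intervalIntegral.integral_const_mul 2 _
  rw [h1, h3, intG2_eq n, T_val q hq]
  have h2n : ((2:ℝ)⁻¹) ^ (4*q) = ((2:ℝ) ^ (4*q))⁻¹ := inv_pow 2 (4*q)
  rw [h2n]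
  have hpow : (0:ℝ) < 2 ^ (4*q) := by positivity
  set S : ℝ := ∑ j ∈ Finset.range q,
      (((4*q).choose (2*j+1) : ℝ) / (((4*q:ℕ):ℝ)/2 - (2*(j:ℝ)+1))^2) with hS
  field_simp
  ring

theorem area_even_power_zero_mod_four (n : ℕ) (hpos : 0 < n) (hmod : n % 4 = 0) :
    Tendsto (fun k : ℕ => ∫ x in (0:ℝ)..π, |Real.cos x ^ n - Real.cos (k * x) ^ n|)
      atTop
      (𝓝 (16 / (2 ^ n * π) *
        ∑ j ∈ Finset.range ((n - 4) / 4 + 1),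
          (n.choose (2 * j + 1) : ℝ) / ((n : ℝ) / 2 - (2 * (j : ℝ) + 1)) ^ 2)) := by
  obtain ⟨q, rfl⟩ : ∃ q, n = 4*q := ⟨n/4, by omega⟩
  have hq : 0 < q := by omega
  have hrange : (4*q - 4)/4 + 1 = q := by omega
  rw [hrange]
  have hn : Even (4*q) := ⟨2*q, by ring⟩
  have h := tendsto_main (4*q) hn
  rw [L_val q hq] at h
  exact h
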